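/- Let a < b, let β > 0 be a real constant, let f be continuously differentiable on [a,b], and let u be twice continuously differentiable on [a,b] with β·u''(x) = −f(x) for all x in [a,b]. Then for every x in [a,b], |u(x) − u_I(x) + (1/(2β))(x−a)(x−b)·f(x)| ≤ ((b−a)^3/(8β)) · sup_{t∈[a,b]} |f'(t)|. -/

import Mathlib

open Set intervalIntegral MeasureTheory

set_option maxHeartbeats 1000000

lemma interp_err (a b K : ℝ) (hab : a < b) (φ φ' φ'' : ℝ → ℝ)
    (h1 : ∀ t ∈ Set.Icc a b, HasDerivWithinAt φ (φ' t) (Set.Icc a b) t)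
    (h2 : ∀ t ∈ Set.Icc a b, HasDerivWithinAt φ' (φ'' t) (Set.Icc a b) t)
    (hK : ∀ t ∈ Set.Icc a b, |φ'' t| ≤ K)
    {x : ℝ} (hx : x ∈ Set.Icc a b) :
    |φ x - (φ a * (b - x) / (b - a) + φ b * (x - a) / (b - a))|
      ≤ K / 2 * ((x - a) * (b - x)) := by
  have hba : (0:ℝ) < b - a := by linarith [hab]
  by_cases hxa : x = a
  · subst hxa
    simp [sub_self, mul_div_assoc, div_self hba.ne']
  by_cases hxb : x = b
  · subst hxb
    simp [sub_self, mul_div_assoc, div_self hba.ne']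
  have hax : a < x := lt_of_le_of_ne hx.1 (Ne.symm hxa)
  have hxb' : x < b := lt_of_le_of_ne hx.2 hxb
  set L : ℝ := (φ x - (φ a * (b - x) / (b - a) + φ b * (x - a) / (b - a))) / ((x - a) * (x - b))
    with hL
  set W : ℝ → ℝ := fun t =>
    φ t - (φ a * (b - t) / (b - a) + φ b * (t - a) / (b - a)) - L * ((t - a) * (t - b)) with hW
  set W' : ℝ → ℝ := fun t =>
    φ' t - (φ a * (-1) / (b - a) + φ b * 1 / (b - a)) - L * (1 * (t - b) + (t - a) * 1) with hW'
  have hint : ∀ t ∈ Set.Ioo a b, HasDerivAt W (W' t) t := by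
    intro t ht
    have hmem : Set.Icc a b ∈ nhds t := Icc_mem_nhds ht.1 ht.2
    have hφ : HasDerivAt φ (φ' t) t := (h1 t (Ioo_subset_Icc_self ht)).hasDerivAt hmem
    have hP : HasDerivAt (fun t : ℝ => φ a * (b - t) / (b - a) + φ b * (t - a) / (b - a))
        (φ a * (-1) / (b - a) + φ b * 1 / (b - a)) t :=
      ((((hasDerivAt_id t).const_sub b).const_mul (φ a)).div_const (b - a)).add
        ((((hasDerivAt_id t).sub_const a).const_mul (φ b)).div_const (b - a))
    have hQ : HasDerivAt (fun t : ℝ => L * ((t - a) * (t - b)))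
        (L * (1 * (t - b) + (t - a) * 1)) t :=
      ((((hasDerivAt_id t).sub_const a).mul ((hasDerivAt_id t).sub_const b)).const_mul L)
    exact (hφ.sub hP).sub hQ
  have hWa : W a = 0 := by
    simp [hW, sub_self, mul_div_assoc, div_self hba.ne']
  have hWb : W b = 0 := by
    simp [hW, sub_self, mul_div_assoc, div_self hba.ne']
  have hxab : (x - a) * (x - b) ≠ 0 :=
    mul_ne_zero (by linarith) (by linarith)
  have hWx : W x = 0 := by
    simp only [hW, hL]
    field_simp
    ring
  have hWc : ContinuousOn W (Set.Icc a b) := by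
    apply ContinuousOn.sub
    apply ContinuousOn.sub
    · intro t ht; exact (h1 t ht).continuousWithinAt
    · fun_prop
    · fun_prop
  obtain ⟨c₁, hc₁, hWc₁⟩ := exists_hasDerivAt_eq_zero hax
    (hWc.mono (Icc_subset_Icc le_rfl hx.2)) (hWa.trans hWx.symm)
    (fun t ht => hint t ⟨ht.1, lt_of_lt_of_le ht.2 hx.2⟩)
  obtain ⟨c₂, hc₂, hWc₂⟩ := exists_hasDerivAt_eq_zero hxb'
    (hWc.mono (Icc_subset_Icc hx.1 le_rfl)) (hWx.trans hWb.symm)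
    (fun t ht => hint t ⟨lt_of_le_of_lt hx.1 ht.1, ht.2⟩)
  have hc12 : c₁ < c₂ := hc₁.2.trans hc₂.1
  have hsub : Set.Icc c₁ c₂ ⊆ Set.Icc a b := Icc_subset_Icc hc₁.1.le hc₂.2.le
  have hW'c : ContinuousOn W' (Set.Icc a b) := by
    apply ContinuousOn.sub
    apply ContinuousOn.sub
    · intro t ht; exact (h2 t ht).continuousWithinAt
    · fun_prop
    · fun_prop
  have hint2 : ∀ t ∈ Set.Ioo c₁ c₂, HasDerivAt W' (φ'' t - L * (1 * 1 + 1 * 1)) t := by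
    intro t ht
    have htab : t ∈ Set.Ioo a b := ⟨hc₁.1.trans ht.1, ht.2.trans hc₂.2⟩
    have hmem : Set.Icc a b ∈ nhds t := Icc_mem_nhds htab.1 htab.2
    have hφ' : HasDerivAt φ' (φ'' t) t := (h2 t (Ioo_subset_Icc_self htab)).hasDerivAt hmem
    have h₃ : HasDerivAt (fun t : ℝ => L * (1 * (t - b) + (t - a) * 1))
        (L * (1 * 1 + 1 * 1)) t := by
      exact ((((hasDerivAt_id t).sub_const b).const_mul 1).add
        (((hasDerivAt_id t).sub_const a).mul_const 1)).const_mul L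
    have := (hφ'.sub_const (φ a * (-1) / (b - a) + φ b * 1 / (b - a))).sub h₃
    exact this
  obtain ⟨ξ, hξ, hξ0⟩ := exists_hasDerivAt_eq_zero hc12 (hW'c.mono hsub)
    (hWc₁.trans hWc₂.symm) hint2
  have hξab : ξ ∈ Set.Icc a b := hsub (Ioo_subset_Icc_self hξ)
  have hLval : L = φ'' ξ / 2 := by
    have : φ'' ξ - L * (1 * 1 + 1 * 1) = 0 := hξ0
    linarith [this]
  have hLle : |L| ≤ K / 2 := by
    rw [hLval, abs_div]
    have := hK ξ hξab
    rw [abs_of_pos (by norm_num : (0:ℝ) < 2)]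
    linarith
  have hid : φ x - (φ a * (b - x) / (b - a) + φ b * (x - a) / (b - a))
      = L * ((x - a) * (x - b)) := by
    rw [hL]; field_simp
  rw [hid, abs_mul]
  have habs : |(x - a) * (x - b)| = (x - a) * (b - x) := by
    rw [abs_mul, abs_of_pos (by linarith), abs_of_neg (by linarith : x - b < 0)]
    ring
  rw [habs]
  apply mul_le_mul_of_nonneg_right hLle
  nlinarith

theorem posterior_corrected_interp_third_order
    (a b β : ℝ) (hab : a < b) (hβ : 0 < β) (f f' u u' u'' : ℝ → ℝ)
    (hf' : ∀ x ∈ Set.Icc a b, HasDerivWithinAt f (f' x) (Set.Icc a b) x)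
    (hf'c : ContinuousOn f' (Set.Icc a b))
    (hu' : ∀ x ∈ Set.Icc a b, HasDerivWithinAt u (u' x) (Set.Icc a b) x)
    (hu'' : ∀ x ∈ Set.Icc a b, HasDerivWithinAt u' (u'' x) (Set.Icc a b) x)
    (hu''c : ContinuousOn u'' (Set.Icc a b))
    (hode : ∀ x ∈ Set.Icc a b, β * u'' x = -f x) :
    ∀ x ∈ Set.Icc a b,
      |u x - (u a * (b - x) / (b - a) + u b * (x - a) / (b - a))
          + 1 / (2 * β) * (x - a) * (x - b) * f x|
        ≤ (b - a) ^ 3 / (8 * β) * ⨆ t : Set.Icc a b, |f' t| := by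
  intro x hx
  have hba : (0:ℝ) < b - a := by linarith
  set M : ℝ := ⨆ t : Set.Icc a b, |f' t| with hMdef
  -- M bounds |f'| on [a,b]
  obtain ⟨Cb, hCb⟩ := (isCompact_Icc (a := a) (b := b)).exists_bound_of_continuousOn hf'c
  have hbdd : BddAbove (Set.range fun t : Set.Icc a b => |f' t|) := by
    refine ⟨Cb, ?_⟩
    rintro _ ⟨t, rfl⟩
    simpa [Real.norm_eq_abs] using hCb t t.2
  have hM : ∀ t ∈ Set.Icc a b, |f' t| ≤ M := fun t ht => le_ciSup hbdd ⟨t, ht⟩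
  have hM0 : 0 ≤ M := le_trans (abs_nonneg _) (hM a ⟨le_rfl, hab.le⟩)
  -- clamped version of f'
  set g : ℝ → ℝ := fun t => f' (max a (min t b)) with hg
  have hclamp : ∀ t : ℝ, max a (min t b) ∈ Set.Icc a b := by
    intro t
    constructor
    · exact le_max_left _ _
    · exact max_le hab.le (min_le_right _ _)
  have hgc : Continuous g :=
    hf'c.comp_continuous (continuous_const.max (continuous_id.min continuous_const)) hclamp
  have hgeq : ∀ t ∈ Set.Icc a b, g t = f' t := by
    intro t ht
    simp [hg, max_eq_right, min_eq_left ht.2, max_eq_right ht.1]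
  have hgM : ∀ t, |g t| ≤ M := fun t => hM _ (hclamp t)
  -- remainder integrand and primitive
  set r : ℝ → ℝ := fun t => 1 / (2 * β) * ((t - a) * (t - b)) * g t with hr
  have hrc : Continuous r := by fun_prop
  set R : ℝ → ℝ := fun y => ∫ t in a..y, r t with hR
  have hRd : ∀ y : ℝ, HasDerivAt R (r y) y := fun y =>
    integral_hasDerivAt_right (hrc.intervalIntegrable a y)
      (hrc.stronglyMeasurableAtFilter _ _) hrc.continuousAt
  set C : ℝ := (u b - u a) / (b - a) with hC
  set φ : ℝ → ℝ := fun t =>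
    u t - u a - C * (t - a) + 1 / (2 * β) * ((t - a) * (t - b) * f t) - R t with hφ
  set φ' : ℝ → ℝ := fun t => u' t - C + 1 / (2 * β) * ((2 * t - a - b) * f t) with hφ'
  set φ'' : ℝ → ℝ := fun t => 1 / (2 * β) * ((2 * t - a - b) * f' t) with hφ''
  have hd1 : ∀ t ∈ Set.Icc a b, HasDerivWithinAt φ (φ' t) (Set.Icc a b) t := by
    intro t ht
    have hq : HasDerivWithinAt (fun t : ℝ => (t - a) * (t - b)) (1 * (t - b) + (t - a) * 1)
        (Set.Icc a b) t :=
      ((hasDerivWithinAt_id t _).sub_const a).mul ((hasDerivWithinAt_id t _).sub_const b)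
    have h2 : HasDerivWithinAt (fun t : ℝ => 1 / (2 * β) * (((t - a) * (t - b)) * f t))
        (1 / (2 * β) * ((1 * (t - b) + (t - a) * 1) * f t + ((t - a) * (t - b)) * f' t))
        (Set.Icc a b) t := (hq.mul (hf' t ht)).const_mul (1 / (2 * β))
    have h3 : HasDerivWithinAt (fun t : ℝ => C * (t - a)) (C * 1) (Set.Icc a b) t :=
      ((hasDerivWithinAt_id t _).sub_const a).const_mul C
    have h4 := ((((hu' t ht).sub_const (u a)).sub h3).add h2).sub (hRd t).hasDerivWithinAt
    convert h4 using 1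
    · rfl
    · rfl
    · rfl
    simp only [hφ', hr, hgeq t ht]
    ring
  have hd2 : ∀ t ∈ Set.Icc a b, HasDerivWithinAt φ' (φ'' t) (Set.Icc a b) t := by
    intro t ht
    have hl : HasDerivWithinAt (fun t : ℝ => 2 * t - a - b) 2 (Set.Icc a b) t := by
      simpa using (((hasDerivWithinAt_id t (Set.Icc a b)).const_mul 2).sub_const a).sub_const b
    have h2 : HasDerivWithinAt (fun t : ℝ => 1 / (2 * β) * ((2 * t - a - b) * f t))
        (1 / (2 * β) * (2 * f t + (2 * t - a - b) * f' t)) (Set.Icc a b) t :=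
      (hl.mul (hf' t ht)).const_mul (1 / (2 * β))
    have h4 := ((hu'' t ht).sub_const C).add h2
    convert h4 using 1
    · rfl
    · rfl
    · rfl
    have hu2 : u'' t = -f t / β := by
      rw [eq_div_iff hβ.ne']
      have := hode t ht
      linarith
    simp only [hφ'', hu2]
    field_simp
    ring
  have hK : ∀ t ∈ Set.Icc a b, |φ'' t| ≤ (b - a) * M / (2 * β) := by
    intro t ht
    have h1 : |2 * t - a - b| ≤ b - a := abs_le.mpr ⟨by linarith [ht.1, ht.2], by linarith [ht.1, ht.2]⟩
    have h2 : |f' t| ≤ M := hM t ht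
    have : |φ'' t| = 1 / (2 * β) * (|2 * t - a - b| * |f' t|) := by
      simp only [hφ'', abs_mul]
      rw [abs_of_pos (by positivity : (0:ℝ) < 1 / (2 * β))]
    rw [this]
    have : |2 * t - a - b| * |f' t| ≤ (b - a) * M :=
      mul_le_mul h1 h2 (abs_nonneg _) (by linarith)
    calc 1 / (2 * β) * (|2 * t - a - b| * |f' t|) ≤ 1 / (2 * β) * ((b - a) * M) := by
          apply mul_le_mul_of_nonneg_left this (by positivity)
      _ = (b - a) * M / (2 * β) := by ring
  have hinterp := interp_err a b ((b - a) * M / (2 * β)) hab φ φ' φ'' hd1 hd2 hK hx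
  -- endpoint values
  have hRa : R a = 0 := by simp [hR]
  have hφa : φ a = 0 := by simp [hφ, hRa]
  have hφb : φ b = -R b := by
    simp only [hφ, hC]
    field_simp
    ring
  -- bound on r over [a,b]
  have hrS : ∀ t ∈ Set.Icc a b, |r t| ≤ 1 / (2 * β) * ((b - a) ^ 2 / 4) * M := by
    intro t ht
    have hq : |(t - a) * (t - b)| ≤ (b - a) ^ 2 / 4 := by
      rw [abs_mul, abs_of_nonneg (by linarith [ht.1] : (0:ℝ) ≤ t - a),
        abs_of_nonpos (by linarith [ht.2] : t - b ≤ 0)]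
      nlinarith [sq_nonneg (2 * t - a - b)]
    have : |r t| = 1 / (2 * β) * |(t - a) * (t - b)| * |g t| := by
      simp only [hr, abs_mul]
      rw [abs_of_pos (by positivity : (0:ℝ) < 1 / (2 * β))]
    rw [this]
    have h1 : 1 / (2 * β) * |(t - a) * (t - b)| ≤ 1 / (2 * β) * ((b - a) ^ 2 / 4) :=
      mul_le_mul_of_nonneg_left hq (by positivity)
    exact mul_le_mul h1 (hgM t) (abs_nonneg _) (by positivity)
  set S : ℝ := 1 / (2 * β) * ((b - a) ^ 2 / 4) * M with hS
  have hS0 : 0 ≤ S := by positivity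
  have hRx : |R x| ≤ S * (x - a) := by
    have := intervalIntegral.norm_integral_le_of_norm_le_const
      (C := S) (f := r) (a := a) (b := x) (fun t ht => by
        rw [Set.uIoc_of_le hx.1] at ht
        simpa [Real.norm_eq_abs] using hrS t ⟨ht.1.le, ht.2.trans hx.2⟩)
    rw [Real.norm_eq_abs] at this
    calc |R x| ≤ S * |x - a| := this
      _ = S * (x - a) := by rw [abs_of_nonneg (by linarith [hx.1])]
  have hRbx : |R b - R x| ≤ S * (b - x) := by
    have hadd : (∫ t in a..x, r t) + ∫ t in x..b, r t = ∫ t in a..b, r t :=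
      intervalIntegral.integral_add_adjacent_intervals (hrc.intervalIntegrable a x)
        (hrc.intervalIntegrable x b)
    have hRdiff : R b - R x = ∫ t in x..b, r t := by
      simp only [hR]; linarith [hadd]
    rw [hRdiff]
    have := intervalIntegral.norm_integral_le_of_norm_le_const
      (C := S) (f := r) (a := x) (b := b) (fun t ht => by
        rw [Set.uIoc_of_le hx.2] at ht
        simpa [Real.norm_eq_abs] using hrS t ⟨hx.1.trans ht.1.le, ht.2⟩)
    rw [Real.norm_eq_abs] at this
    calc |∫ t in x..b, r t| ≤ S * |b - x| := this
      _ = S * (b - x) := by rw [abs_of_nonneg (by linarith [hx.2])]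
  -- decomposition
  have hkey : u x - (u a * (b - x) / (b - a) + u b * (x - a) / (b - a))
      + 1 / (2 * β) * (x - a) * (x - b) * f x
      = (φ x - (φ a * (b - x) / (b - a) + φ b * (x - a) / (b - a)))
        + ((b - x) / (b - a) * R x - (x - a) / (b - a) * (R b - R x)) := by
    rw [hφa, hφb]
    simp only [hφ, hC]
    field_simp
    ring
  rw [hkey]
  have hqle : (x - a) * (b - x) ≤ (b - a) ^ 2 / 4 := by nlinarith [sq_nonneg (2 * x - a - b)]
  have hq0 : (0:ℝ) ≤ (x - a) * (b - x) := mul_nonneg (by linarith [hx.1]) (by linarith [hx.2])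
  have hterm2 : |(b - x) / (b - a) * R x - (x - a) / (b - a) * (R b - R x)|
      ≤ S * (b - a) / 2 := by
    have hb1 : |(b - x) / (b - a) * R x| ≤ (b - x) / (b - a) * (S * (x - a)) := by
      rw [abs_mul, abs_of_nonneg (div_nonneg (by linarith [hx.2] : (0:ℝ) ≤ b - x) hba.le)]
      exact mul_le_mul_of_nonneg_left hRx (div_nonneg (by linarith [hx.2]) hba.le)
    have hb2 : |(x - a) / (b - a) * (R b - R x)| ≤ (x - a) / (b - a) * (S * (b - x)) := by
      rw [abs_mul, abs_of_nonneg (div_nonneg (by linarith [hx.1] : (0:ℝ) ≤ x - a) hba.le)]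
      exact mul_le_mul_of_nonneg_left hRbx (div_nonneg (by linarith [hx.1]) hba.le)
    calc |(b - x) / (b - a) * R x - (x - a) / (b - a) * (R b - R x)|
        ≤ |(b - x) / (b - a) * R x| + |(x - a) / (b - a) * (R b - R x)| := abs_sub _ _
      _ ≤ (b - x) / (b - a) * (S * (x - a)) + (x - a) / (b - a) * (S * (b - x)) :=
          add_le_add hb1 hb2
      _ = ((b - x) * (S * (x - a)) + (x - a) * (S * (b - x))) / (b - a) := by
          rw [div_mul_eq_mul_div, div_mul_eq_mul_div, ← add_div]
      _ = S * (2 * ((x - a) * (b - x))) / (b - a) := by ring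
      _ ≤ S * (b - a) / 2 := by
          rw [div_le_div_iff₀ hba (by norm_num : (0:ℝ) < 2)]
          nlinarith [mul_le_mul_of_nonneg_left hqle hS0]
  calc |(φ x - (φ a * (b - x) / (b - a) + φ b * (x - a) / (b - a)))
        + ((b - x) / (b - a) * R x - (x - a) / (b - a) * (R b - R x))|
      ≤ |φ x - (φ a * (b - x) / (b - a) + φ b * (x - a) / (b - a))|
        + |(b - x) / (b - a) * R x - (x - a) / (b - a) * (R b - R x)| := abs_add_le _ _
    _ ≤ (b - a) * M / (2 * β) / 2 * ((x - a) * (b - x))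
        + S * (b - a) / 2 := add_le_add hinterp hterm2
    _ ≤ (b - a) * M / (2 * β) / 2 * ((b - a) ^ 2 / 4) + S * (b - a) / 2 := by
        have hnn : (0:ℝ) ≤ (b - a) * M / (2 * β) / 2 :=
          div_nonneg (div_nonneg (mul_nonneg hba.le hM0) (by positivity)) (by norm_num)
        exact add_le_add_left (mul_le_mul_of_nonneg_left hqle hnn) _
    _ = (b - a) ^ 3 / (8 * β) * M := by
        rw [hS]; field_simp; ring
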